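/- For every nonnegative integer m, ∑_{k=0}^{2m+1} (-2)^k C(2m+1,k) · k^2 · H_k = 2·(2m+1)·(4m+1)·( H_m - 2H_{2m} - 1/(4m+1) ), where H_j is the j-th harmonic number. -/

import Mathlib

open Finset

noncomputable def H (n : ℕ) : ℝ := ∑ i ∈ Finset.range n, (1:ℝ)/(i+1)

lemma H_zero : H 0 = 0 := by simp [H]

lemma H_succ (n : ℕ) : H (n+1) = H n + 1/((n:ℝ)+1) := by
  simp [H, Finset.sum_range_succ]

noncomputable def A (n : ℕ) : ℝ := ∑ k ∈ Finset.range (n+1), (-2:ℝ)^k * (n.choose k : ℝ) * H k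

lemma hE (n : ℕ) : ∑ k ∈ Finset.range (n+1), (-2:ℝ)^k * (n.choose k : ℝ) = (-1)^n := by
  have h := add_pow (-2 : ℝ) 1 n
  norm_num at h
  rw [← h]

lemma cast_key (n i : ℕ) :
    ((n:ℝ)+1) * (n.choose i : ℝ) = ((n+1).choose (i+1) : ℝ) * ((i:ℝ)+1) := by
  have := Nat.add_one_mul_choose_eq n i
  exact_mod_cast congrArg (Nat.cast : ℕ → ℝ) this

lemma hB (n : ℕ) : ∑ i ∈ Finset.range (n+1), (-2:ℝ)^i * (n.choose i : ℝ) / ((i:ℝ)+1)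
    = (1 - (-1:ℝ)^(n+1))/(2*((n:ℝ)+1)) := by
  have hn : ((n:ℝ)+1) ≠ 0 := by positivity
  have step : ∀ i ∈ Finset.range (n+1),
      (-2:ℝ)^i * (n.choose i : ℝ) / ((i:ℝ)+1)
        = (-(1/(2*((n:ℝ)+1)))) * ((-2:ℝ)^(i+1) * ((n+1).choose (i+1) : ℝ)) := by
    intro i _
    have hi : ((i:ℝ)+1) ≠ 0 := by positivity
    have h2 : (n.choose i : ℝ)/((i:ℝ)+1) = ((n+1).choose (i+1) : ℝ)/((n:ℝ)+1) := by
      rw [div_eq_div_iff hi hn]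
      linear_combination cast_key n i
    rw [mul_div_assoc, h2, pow_succ]
    field_simp
  rw [Finset.sum_congr rfl step, ← Finset.mul_sum]
  have hs : ∑ i ∈ Finset.range (n+1), (-2:ℝ)^(i+1) * ((n+1).choose (i+1) : ℝ)
      = (-1:ℝ)^(n+1) - 1 := by
    have h1 := Finset.sum_range_succ' (fun k => (-2:ℝ)^k * ((n+1).choose k : ℝ)) (n+1)
    have h2 := hE (n+1)
    rw [h1] at h2
    norm_num at h2
    linarith
  rw [hs]
  field_simp
  ring

lemma hArec (n : ℕ) : A (n+1) = -A n - (1 - (-1:ℝ)^(n+1))/((n:ℝ)+1) := by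
  have h0 : A (n+1) = ∑ i ∈ Finset.range (n+1),
      (-2:ℝ)^(i+1) * (((n+1).choose (i+1) : ℕ) : ℝ) * H (i+1) := by
    rw [A, Finset.sum_range_succ' (fun k => (-2:ℝ)^k * ((n+1).choose k : ℝ) * H k) (n+1)]
    simp [H_zero]
  rw [h0]
  have step : ∀ i ∈ Finset.range (n+1),
      (-2:ℝ)^(i+1) * (((n+1).choose (i+1) : ℕ) : ℝ) * H (i+1)
        = (-2) * ((-2:ℝ)^i * (n.choose i : ℝ) * H i)
          + (-2) * ((-2:ℝ)^i * (n.choose i : ℝ) / ((i:ℝ)+1))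
          + ((-2:ℝ)^(i+1) * (n.choose (i+1) : ℝ) * H (i+1)) := by
    intro i _
    have hi : ((i:ℝ)+1) ≠ 0 := by positivity
    rw [Nat.choose_succ_succ, H_succ]
    push_cast
    field_simp
    ring
  rw [Finset.sum_congr rfl step]
  rw [Finset.sum_add_distrib, Finset.sum_add_distrib, ← Finset.mul_sum, ← Finset.mul_sum]
  have hA : ∑ i ∈ Finset.range (n+1), (-2:ℝ)^i * (n.choose i : ℝ) * H i = A n := rfl
  have h3 : ∑ i ∈ Finset.range (n+1), (-2:ℝ)^(i+1) * (n.choose (i+1) : ℝ) * H (i+1) = A n := by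
    have h1 := Finset.sum_range_succ' (fun k => (-2:ℝ)^k * (n.choose k : ℝ) * H k) (n+1)
    have h2 : ∑ k ∈ Finset.range (n+2), (-2:ℝ)^k * (n.choose k : ℝ) * H k = A n := by
      rw [Finset.sum_range_succ]
      simp [A, Nat.choose_succ_self]
    rw [h1] at h2
    simp only [H_zero] at h2
    simp at h2
    linarith
  rw [hA, h3, hB]
  have hn : ((n:ℝ)+1) ≠ 0 := by positivity
  field_simp
  ring

lemma neg_one_even (m : ℕ) : ((-1:ℝ))^(2*m) = 1 := by
  rw [pow_mul]; norm_num

lemma neg_one_odd (m : ℕ) : ((-1:ℝ))^(2*m+1) = -1 := by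
  rw [pow_succ, neg_one_even]; norm_num

lemma hAodd (m : ℕ) : A (2*m+1) = H m - 2 * H (2*m+1) := by
  induction m with
  | zero =>
      simp only [Nat.mul_zero, Nat.zero_add]
      show A 1 = H 0 - 2 * H 1
      simp [A, Finset.sum_range_succ, H_zero, H_succ]
  | succ m ih =>
      have e1 := hArec (2*m+1)
      have e2 := hArec (2*m+2)
      have p1 : ((-1:ℝ))^(2*m+1+1) = 1 := by
        have h : 2*m+1+1 = 2*(m+1) := by ring
        rw [h, neg_one_even]
      have p2 : ((-1:ℝ))^(2*m+2+1) = -1 := by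
        have h : 2*m+2+1 = 2*(m+1)+1 := by ring
        rw [h, neg_one_odd]
      rw [p1] at e1
      rw [p2] at e2
      have hidx : 2*(m+1)+1 = 2*m+2+1 := by ring
      rw [hidx]
      have hH1 : H (m+1) = H m + 1/((m:ℝ)+1) := H_succ m
      have hH2 : H (2*m+2) = H (2*m+1) + 1/((2*(m:ℝ)+1)+1) := by
        have h : 2*m+2 = (2*m+1)+1 := by ring
        rw [h, H_succ]; push_cast; ring
      have hH3 : H (2*m+2+1) = H (2*m+2) + 1/((2*(m:ℝ)+2)+1) := by
        rw [H_succ]; push_cast; ring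
      rw [e2, e1, ih, hH1, hH3, hH2]
      push_cast
      have d1 : ((m:ℝ)+1) ≠ 0 := by positivity
      have d2 : (2*(m:ℝ)+1+1) ≠ 0 := by positivity
      have d3 : (2*(m:ℝ)+2+1) ≠ 0 := by positivity
      field_simp
      ring

lemma hS1 (n : ℕ) : ∑ k ∈ Finset.range (n+2), (-2:ℝ)^k * ((n+1).choose k : ℝ) * (k:ℝ) * H k
    = -2*((n:ℝ)+1)*A n + (-1:ℝ)^(n+1) - 1 := by
  rw [Finset.sum_range_succ' (fun k => (-2:ℝ)^k * ((n+1).choose k : ℝ) * (k:ℝ) * H k) (n+1)]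
  simp only [Nat.cast_zero, mul_zero, zero_mul, add_zero, H_zero]
  have step : ∀ i ∈ Finset.range (n+1),
      (-2:ℝ)^(i+1) * ((n+1).choose (i+1) : ℝ) * ((i+1 : ℕ) : ℝ) * H (i+1)
        = (-2*((n:ℝ)+1)) * ((-2:ℝ)^i * (n.choose i : ℝ) * H i)
          + (-2*((n:ℝ)+1)) * ((-2:ℝ)^i * (n.choose i : ℝ) / ((i:ℝ)+1)) := by
    intro i _
    have hi : ((i:ℝ)+1) ≠ 0 := by positivity
    have key := cast_key n i
    rw [H_succ]
    push_cast
    field_simp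
    linear_combination (2*(-2:ℝ)^i*((i:ℝ)+1)*H i + 2*(-2:ℝ)^i) * key
  rw [Finset.sum_congr rfl step, Finset.sum_add_distrib, ← Finset.mul_sum, ← Finset.mul_sum]
  have hA : ∑ i ∈ Finset.range (n+1), (-2:ℝ)^i * (n.choose i : ℝ) * H i = A n := rfl
  rw [hA, hB]
  have hn : ((n:ℝ)+1) ≠ 0 := by positivity
  field_simp
  ring

lemma hT (n : ℕ) : ∑ k ∈ Finset.range (n+2), (-2:ℝ)^k * ((n+1).choose k : ℝ) * (k:ℝ)^2 * H k
    = -2*((n:ℝ)+1)*((∑ k ∈ Finset.range (n+1), (-2:ℝ)^k * (n.choose k : ℝ) * (k:ℝ) * H k) + A n)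
      + 2*((n:ℝ)+1)*(-1:ℝ)^(n+1) := by
  rw [Finset.sum_range_succ' (fun k => (-2:ℝ)^k * ((n+1).choose k : ℝ) * (k:ℝ)^2 * H k) (n+1)]
  simp only [Nat.cast_zero, mul_zero, zero_mul, add_zero, H_zero]
  have step : ∀ i ∈ Finset.range (n+1),
      (-2:ℝ)^(i+1) * ((n+1).choose (i+1) : ℝ) * ((i+1 : ℕ) : ℝ)^2 * H (i+1)
        = (-2*((n:ℝ)+1)) * ((-2:ℝ)^i * (n.choose i : ℝ) * (i:ℝ) * H i)
          + (-2*((n:ℝ)+1)) * ((-2:ℝ)^i * (n.choose i : ℝ) * H i)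
          + (-2*((n:ℝ)+1)) * ((-2:ℝ)^i * (n.choose i : ℝ)) := by
    intro i _
    have hi : ((i:ℝ)+1) ≠ 0 := by positivity
    have key := cast_key n i
    rw [H_succ]
    push_cast
    field_simp
    linear_combination ((2*(-2:ℝ)^i*((i:ℝ)+1)*H i + 2*(-2:ℝ)^i) * ((i:ℝ)+1) - 2*(-2:ℝ)^i*(i:ℝ)*(H i + 1 + (i:ℝ)*H i)) * key
  rw [Finset.sum_congr rfl step, Finset.sum_add_distrib, Finset.sum_add_distrib,
    ← Finset.mul_sum, ← Finset.mul_sum, ← Finset.mul_sum]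
  have hA : ∑ i ∈ Finset.range (n+1), (-2:ℝ)^i * (n.choose i : ℝ) * H i = A n := rfl
  rw [hA, hE]
  have hp : ((-1:ℝ))^(n+1) = -(-1:ℝ)^n := by rw [pow_succ]; ring
  rw [hp]
  ring

theorem stmt7 (m : ℕ) :
    ∑ k ∈ Finset.range (2*m+2), (-2:ℝ)^k * ((2*m+1).choose k : ℝ) * (k:ℝ)^2 * H k
      = 2 * (2*(m:ℝ)+1) * (4*(m:ℝ)+1) * (H m - 2 * H (2*m) - 1/(4*(m:ℝ)+1)) := by
  cases m with
  | zero =>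
      simp [Finset.sum_range_succ, H_zero, H_succ]
  | succ m =>
      have hidx : 2*(m+1)+2 = (2*m+2)+2 := by ring
      have hidx2 : 2*(m+1)+1 = (2*m+2)+1 := by ring
      rw [hidx, hidx2]
      rw [hT (2*m+2)]
      have hS := hS1 (2*m+1)
      have hA2 : A (2*m+2) = -A (2*m+1) := by
        have e := hArec (2*m+1)
        have p1 : ((-1:ℝ))^(2*m+1+1) = 1 := by
          have h : 2*m+1+1 = 2*(m+1) := by ring
          rw [h, neg_one_even]
        rw [p1] at e
        rw [show (2*m+2) = (2*m+1)+1 from by ring, e]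
        ring
      have p1 : ((-1:ℝ))^(2*m+1+1) = 1 := by
        have h : 2*m+1+1 = 2*(m+1) := by ring
        rw [h, neg_one_even]
      have p2 : ((-1:ℝ))^(2*m+2+1) = -1 := by
        have h : 2*m+2+1 = 2*(m+1)+1 := by ring
        rw [h, neg_one_odd]
      rw [p1] at hS
      simp only [show 2*m+1+2 = 2*m+2+1 from by ring, show 2*m+1+1 = 2*m+2 from by ring] at hS
      rw [hS, hA2, p2, hAodd]
      have hH1 : H (m+1) = H m + 1/((m:ℝ)+1) := H_succ m
      have hH2 : H (2*(m+1)) = H (2*m+1) + 1/((2*(m:ℝ)+1)+1) := by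
        rw [show 2*(m+1) = (2*m+1)+1 from by ring, H_succ]; push_cast; ring
      have hH3 : H (2*m+1) = H (2*m) + 1/((2*(m:ℝ))+1) := by
        rw [H_succ]; push_cast; ring
      rw [hH1, hH2, hH3]
      push_cast
      have d1 : ((m:ℝ)+1) ≠ 0 := by positivity
      have d2 : (2*(m:ℝ)+1) ≠ 0 := by positivity
      have d3 : (2*(m:ℝ)+1+1) ≠ 0 := by positivity
      have d4 : (4*(m:ℝ)+4+1) ≠ 0 := by positivity
      field_simp
      ring
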